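/- Let D = (K/F, Φ) be a crossed product division algebra with involution * satisfying K* ⊆ K, G = Gal(K/F), and standard basis (e_σ). Then the following are equivalent: (1) (k*)^σ = (k^σ)* for all k ∈ K and σ ∈ G; (2) e_σ*·e_σ ∈ K for all σ ∈ G; (3) f(e_τ*·e_σ) = 0 for all σ ≠ τ in G. -/
import Mathlib


/-- An involution on a ring: an additive, anti-multiplicative map of order at most 2. -/
def IsInvolution {R : Type*} [Ring R] (τ : R → R) : Prop :=
  (∀ a b : R, τ (a + b) = τ a + τ b) ∧ (∀ a b : R, τ (a * b) = τ b * τ a) ∧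
    (∀ a : R, τ (τ a) = a)

/-- Let `D = (K/F, Φ)` be a crossed product division algebra (right `K`-space with basis
`(e_σ)_{σ ∈ G}` and `k e_σ = e_σ k^σ`) with involution `*` leaving `K` invariant, and let
`f : D → K` be the coefficient-of-`e_id` projection.  The following are equivalent:
(1) `(k*)^σ = (k^σ)*` for all `k, σ`;
(2) `e_σ* e_σ ∈ K` for all `σ`;
(3) `f(e_τ* e_σ) = 0` whenever `σ ≠ τ`. -/
theorem stmt_15 {K D G : Type*} [Field K] [DivisionRing D]
    [Group G] [Fintype G] [MulSemiringAction G K]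
    (ι : K →+* D) (e : G → D)
    (hbasis : ∀ d : D, ∃! c : G → K, d = ∑ σ : G, e σ * ι (c σ))
    (hcomm : ∀ (k : K) (σ : G), ι k * e σ = e σ * ι (σ • k))
    (hfaith : ∀ σ τ : G, σ ≠ τ → ∃ k : K, σ • k ≠ τ • k)
    (he1 : e 1 = 1)
    (invo : D → D) (hinvo : IsInvolution invo)
    (invoK : K → K) (hinvoK : ∀ k, invo (ι k) = ι (invoK k))
    (f : D → K) (hf : ∀ c : G → K, f (∑ σ : G, e σ * ι (c σ)) = c 1) :
    ((∀ (k : K) (σ : G), σ • invoK k = invoK (σ • k)) ↔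
        (∀ σ : G, ∃ k : K, invo (e σ) * e σ = ι k)) ∧
    ((∀ (k : K) (σ : G), σ • invoK k = invoK (σ • k)) ↔
        (∀ σ τ : G, σ ≠ τ → f (invo (e τ) * e σ) = 0)) := by
  classical
  obtain ⟨hadd, hmul', hinv2⟩ := hinvo
  have hι : Function.Injective ι := ι.injective
  choose coef hcoef huniq using hbasis
  -- uniqueness of coefficients
  have huniq' : ∀ c c' : G → K,
      (∑ σ : G, e σ * ι (c σ)) = (∑ σ : G, e σ * ι (c' σ)) → c = c' := by
    intro c c' h
    have h1 := huniq (∑ σ : G, e σ * ι (c σ)) c rfl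
    have h2 := huniq (∑ σ : G, e σ * ι (c σ)) c' h
    rw [h1, h2]
  -- sums with a single nonzero coefficient
  have hsingle : ∀ (π : G) (k : K),
      (∑ σ : G, e σ * ι (if σ = π then k else 0)) = e π * ι k := by
    intro π k
    rw [Finset.sum_eq_single π]
    · simp
    · intro b _ hb; simp [hb]
    · simp
  have hene : ∀ σ : G, e σ ≠ 0 := by
    intro σ h0
    have h1 : (∑ τ : G, e τ * ι ((fun τ => if τ = σ then (1 : K) else 0) τ))
        = ∑ τ : G, e τ * ι ((fun _ => (0 : K)) τ) := by
      rw [hsingle]; simp [h0]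
    have h2 := congrFun (huniq' _ _ h1) σ
    simp at h2
  have hfsingle : ∀ (π : G) (k : K), f (e π * ι k) = if π = 1 then k else 0 := by
    intro π k
    have h := hf (fun σ => if σ = π then k else 0)
    rw [hsingle] at h
    rw [h]
    by_cases hπ : π = 1 <;> simp [hπ, eq_comm]
  have hinvo0 : invo 0 = 0 := by
    have h := hadd 0 0
    rw [add_zero] at h
    exact left_eq_add.mp h
  have hK2 : ∀ k : K, invoK (invoK k) = k := by
    intro k
    apply hι
    rw [← hinvoK, ← hinvoK, hinv2]
  have hsz : ∀ (σ : G) (a : K), σ • a = 0 → a = 0 := by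
    intro σ a h
    have h2 := congrArg (σ⁻¹ • ·) h
    simpa using h2
  -- the multiplication rule e ρ * e σ = e (σρ) * ι (Φ ρ σ)
  have hmulrule : ∀ ρ σ : G, ∃ w : K, w ≠ 0 ∧ e ρ * e σ = e (σ * ρ) * ι w := by
    intro ρ σ
    have hc := hcoef (e ρ * e σ)
    have key : ∀ (k : K) (π : G),
        (π • k) * coef (e ρ * e σ) π = coef (e ρ * e σ) π * ((σ * ρ) • k) := by
      intro k π
      have h1 : ι k * (e ρ * e σ) = (e ρ * e σ) * ι ((σ * ρ) • k) := by
        calc ι k * (e ρ * e σ)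
            = (e ρ * ι (ρ • k)) * e σ := by rw [← mul_assoc, hcomm]
          _ = e ρ * (e σ * ι (σ • ρ • k)) := by rw [mul_assoc, hcomm]
          _ = (e ρ * e σ) * ι ((σ * ρ) • k) := by rw [← mul_assoc, mul_smul]
      have hL : ι k * (e ρ * e σ)
          = ∑ π : G, e π * ι ((π • k) * coef (e ρ * e σ) π) := by
        conv_lhs => rw [hc]
        rw [Finset.mul_sum]
        refine Finset.sum_congr rfl fun π _ => ?_
        rw [← mul_assoc, hcomm, mul_assoc, ← map_mul]
      have hR : (e ρ * e σ) * ι ((σ * ρ) • k)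
          = ∑ π : G, e π * ι (coef (e ρ * e σ) π * ((σ * ρ) • k)) := by
        conv_lhs => rw [hc]
        rw [Finset.sum_mul]
        refine Finset.sum_congr rfl fun π _ => ?_
        rw [mul_assoc, ← map_mul]
      have heq : (∑ π : G, e π * ι ((π • k) * coef (e ρ * e σ) π))
          = ∑ π : G, e π * ι (coef (e ρ * e σ) π * ((σ * ρ) • k)) := by
        rw [← hL, ← hR, h1]
      exact congrFun (huniq' _ _ heq) π
    have hzero : ∀ π : G, π ≠ σ * ρ → coef (e ρ * e σ) π = 0 := by
      intro π hπ
      obtain ⟨k, hk⟩ := hfaith π (σ * ρ) hπ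
      by_contra hne
      exact hk (mul_right_cancel₀ hne (by rw [key k π, mul_comm]))
    have hd2 : e ρ * e σ = e (σ * ρ) * ι (coef (e ρ * e σ) (σ * ρ)) := by
      conv_lhs => rw [hc]
      rw [← hsingle (σ * ρ) (coef (e ρ * e σ) (σ * ρ))]
      refine Finset.sum_congr rfl fun π _ => ?_
      by_cases h : π = σ * ρ
      · simp [h]
      · simp [h, hzero π h]
    refine ⟨coef (e ρ * e σ) (σ * ρ), ?_, hd2⟩
    intro h0
    exact mul_ne_zero (hene ρ) (hene σ) (by rw [hd2, h0, map_zero, mul_zero])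
  choose Φ hΦne hΦ2 using hmulrule
  -- key identity from applying the involution to ι k * e σ = e σ * ι (σ • k)
  have keyA : ∀ (σ : G) (k : K),
      ι (invoK (σ • k)) * invo (e σ) = invo (e σ) * ι (invoK k) := by
    intro σ k
    have h1 : invo (ι k * e σ) = invo (e σ) * ι (invoK k) := by rw [hmul', hinvoK]
    have h2 : invo (e σ * ι (σ • k)) = ι (invoK (σ • k)) * invo (e σ) := by
      rw [hmul', hinvoK]
    rw [← h2, ← h1, hcomm]
  -- coefficient form of keyA
  have keyB : ∀ (τ ρ : G) (k : K),
      (ρ • invoK (τ • k)) * coef (invo (e τ)) ρ = coef (invo (e τ)) ρ * invoK k := by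
    intro τ ρ k
    have hc := hcoef (invo (e τ))
    have hL : ι (invoK (τ • k)) * invo (e τ)
        = ∑ π : G, e π * ι ((π • invoK (τ • k)) * coef (invo (e τ)) π) := by
      conv_lhs => rw [hc]
      rw [Finset.mul_sum]
      refine Finset.sum_congr rfl fun π _ => ?_
      rw [← mul_assoc, hcomm, mul_assoc, ← map_mul]
    have hR : invo (e τ) * ι (invoK k)
        = ∑ π : G, e π * ι (coef (invo (e τ)) π * invoK k) := by
      conv_lhs => rw [hc]
      rw [Finset.sum_mul]
      refine Finset.sum_congr rfl fun π _ => ?_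
      rw [mul_assoc, ← map_mul]
    have heq : (∑ π : G, e π * ι ((π • invoK (τ • k)) * coef (invo (e τ)) π))
        = ∑ π : G, e π * ι (coef (invo (e τ)) π * invoK k) := by
      rw [← hL, ← hR, keyA]
    exact congrFun (huniq' _ _ heq) ρ
  -- from vanishing off τ⁻¹ to the normal form of invo (e τ)
  have hconc : ∀ τ : G, (∀ ρ : G, ρ ≠ τ⁻¹ → coef (invo (e τ)) ρ = 0) →
      ∃ a : K, a ≠ 0 ∧ invo (e τ) = e τ⁻¹ * ι a := by
    intro τ hzero
    refine ⟨coef (invo (e τ)) τ⁻¹, ?_, ?_⟩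
    · intro h0
      have hz : invo (e τ) = 0 := by
        rw [hcoef (invo (e τ))]
        apply Finset.sum_eq_zero
        intro ρ _
        by_cases h : ρ = τ⁻¹
        · rw [h, h0, map_zero, mul_zero]
        · rw [hzero ρ h, map_zero, mul_zero]
      exact hene τ (by rw [← hinv2 (e τ), hz, hinvo0])
    · conv_lhs => rw [hcoef (invo (e τ))]
      rw [← hsingle τ⁻¹ (coef (invo (e τ)) τ⁻¹)]
      refine Finset.sum_congr rfl fun ρ _ => ?_
      by_cases h : ρ = τ⁻¹
      · simp [h]
      · simp [h, hzero ρ h]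
  -- (1) implies the normal form P
  have hP1 : (∀ (k : K) (σ : G), σ • invoK k = invoK (σ • k)) →
      ∀ τ : G, ∃ a : K, a ≠ 0 ∧ invo (e τ) = e τ⁻¹ * ι a := by
    intro h1 τ
    apply hconc
    intro ρ hρ
    by_contra hne
    have hfix : ∀ m : K, (ρ * τ) • m = m := by
      intro m
      have h := keyB τ ρ (invoK m)
      rw [← h1, hK2, smul_smul] at h
      exact mul_right_cancel₀ hne (by rw [h, mul_comm])
    have hρτ : ρ * τ ≠ 1 := fun h => hρ (mul_eq_one_iff_eq_inv.mp h)
    obtain ⟨k, hk⟩ := hfaith (ρ * τ) 1 hρτ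
    exact hk (by rw [hfix, one_smul])
  -- P implies (1)
  have hPto1 : (∀ τ : G, ∃ a : K, a ≠ 0 ∧ invo (e τ) = e τ⁻¹ * ι a) →
      ∀ (k : K) (σ : G), σ • invoK k = invoK (σ • k) := by
    intro hP k τ
    obtain ⟨a, ha, hA⟩ := hP τ
    have h := keyA τ k
    rw [hA, ← mul_assoc, hcomm, mul_assoc, ← map_mul, mul_assoc, ← map_mul] at h
    have h2 := hι (mul_left_cancel₀ (hene τ⁻¹) h)
    have h3 : τ⁻¹ • invoK (τ • k) = invoK k :=
      mul_right_cancel₀ ha (by rw [h2, mul_comm])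
    rw [← h3, smul_smul, mul_inv_cancel, one_smul]
  -- P implies (2)
  have hPto2 : (∀ τ : G, ∃ a : K, a ≠ 0 ∧ invo (e τ) = e τ⁻¹ * ι a) →
      ∀ σ : G, ∃ k : K, invo (e σ) * e σ = ι k := by
    intro hP σ
    obtain ⟨a, _, hA⟩ := hP σ
    refine ⟨Φ σ⁻¹ σ * (σ • a), ?_⟩
    rw [hA, mul_assoc, hcomm, ← mul_assoc, hΦ2, mul_assoc, ← map_mul,
      mul_inv_cancel, he1, one_mul]
  -- (2) implies (1)
  have h2to1 : (∀ σ : G, ∃ k : K, invo (e σ) * e σ = ι k) →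
      ∀ (k : K) (σ : G), σ • invoK k = invoK (σ • k) := by
    intro h2 k σ
    obtain ⟨m, hm⟩ := h2 σ
    have hm0 : m ≠ 0 := by
      intro h0
      rw [h0, map_zero] at hm
      have hinvne : invo (e σ) ≠ 0 := fun h =>
        hene σ (by rw [← hinv2 (e σ), h, hinvo0])
      exact mul_ne_zero hinvne (hene σ) hm
    have h : ι (invoK (σ • k)) * invo (e σ) * e σ
        = invo (e σ) * ι (invoK k) * e σ := by rw [keyA]
    rw [mul_assoc, mul_assoc, hcomm, hm, ← mul_assoc, hm, ← map_mul, ← map_mul] at h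
    have h' := hι h
    exact mul_right_cancel₀ hm0 (by rw [h', mul_comm])
  -- P implies (3)
  have hPto3 : (∀ τ : G, ∃ a : K, a ≠ 0 ∧ invo (e τ) = e τ⁻¹ * ι a) →
      ∀ σ τ : G, σ ≠ τ → f (invo (e τ) * e σ) = 0 := by
    intro hP σ τ hστ
    obtain ⟨a, _, hA⟩ := hP τ
    rw [hA, mul_assoc, hcomm, ← mul_assoc, hΦ2, mul_assoc, ← map_mul, hfsingle]
    exact if_neg fun h => hστ (mul_inv_eq_one.mp h)
  -- (3) implies P
  have h3toP : (∀ σ τ : G, σ ≠ τ → f (invo (e τ) * e σ) = 0) →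
      ∀ τ : G, ∃ a : K, a ≠ 0 ∧ invo (e τ) = e τ⁻¹ * ι a := by
    intro h3 τ
    apply hconc
    intro ρ hρ
    have hρτ : ρ⁻¹ ≠ τ := fun h => hρ (by rw [← h, inv_inv])
    have hexp : invo (e τ) * e ρ⁻¹
        = ∑ π : G, e π * ι ((fun π => Φ ((ρ⁻¹)⁻¹ * π) ρ⁻¹ *
            (ρ⁻¹ • coef (invo (e τ)) ((ρ⁻¹)⁻¹ * π))) π) := by
      conv_lhs => rw [hcoef (invo (e τ))]
      rw [Finset.sum_mul]
      rw [← Equiv.sum_comp (Equiv.mulLeft ρ⁻¹) (fun π => e π * ι (Φ ((ρ⁻¹)⁻¹ * π) ρ⁻¹ *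
            (ρ⁻¹ • coef (invo (e τ)) ((ρ⁻¹)⁻¹ * π))))]
      refine Finset.sum_congr rfl fun π _ => ?_
      simp only [Equiv.coe_mulLeft, inv_mul_cancel_left]
      rw [mul_assoc, hcomm, ← mul_assoc, hΦ2, mul_assoc, ← map_mul]
    have h := h3 ρ⁻¹ τ hρτ
    rw [hexp, hf] at h
    simp only [inv_inv, mul_one] at h
    have := hsz ρ⁻¹ _ ((mul_eq_zero.mp h).resolve_left (hΦne ρ ρ⁻¹))
    exact this
  refine ⟨⟨fun h1 => hPto2 (hP1 h1), h2to1⟩,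
    ⟨fun h1 => hPto3 (hP1 h1), fun h3 => hPto1 (h3toP h3)⟩⟩
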